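/- Let β be the unique solution of N(x)/N_{μ,v}(x) = (1-Φ(x))/(1-Φ_{μ,v}(x)) for 0 < v < 1. Then lim_{v→0} β_{μ,v} = μ and lim_{v→0} Φ_{μ,v}(β_{μ,v}) = 0. -/

import Mathlib

noncomputable def normalPDF (μ v x : ℝ) : ℝ :=
  (Real.sqrt (2 * Real.pi * v))⁻¹ * Real.exp (-(x - μ)^2 / (2 * v))

noncomputable def normalCDF (μ v x : ℝ) : ℝ :=
  ∫ t in Set.Iio x, normalPDF μ v t

section Aux

noncomputable def sphi (y : ℝ) : ℝ := (Real.sqrt (2 * Real.pi))⁻¹ * Real.exp (-y ^ 2 / 2)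
noncomputable def sT (y : ℝ) : ℝ := ∫ t in Set.Ioi y, sphi t
noncomputable def sPh (y : ℝ) : ℝ := ∫ t in Set.Iio y, sphi t

open MeasureTheory Real Set

lemma sphi_pos (y : ℝ) : 0 < sphi y :=
  mul_pos (inv_pos.mpr (Real.sqrt_pos.mpr (by positivity))) (Real.exp_pos _)

lemma sphi_even (y : ℝ) : sphi (-y) = sphi y := by simp [sphi]

lemma sphi_le_sphi_zero (y : ℝ) : sphi y ≤ sphi 0 := by
  unfold sphi
  apply mul_le_mul_of_nonneg_left _ (by positivity)
  apply Real.exp_le_exp.mpr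
  nlinarith [sq_nonneg y]

lemma sphi_eq : sphi = fun y => (Real.sqrt (2 * Real.pi))⁻¹ * Real.exp (-(1/2 : ℝ) * y ^ 2) := by
  funext y; rw [sphi]; ring_nf

lemma integrable_sphi : Integrable sphi := by
  rw [sphi_eq]
  exact (integrable_exp_neg_mul_sq (by norm_num : (0:ℝ) < 1/2)).const_mul _

lemma integral_sphi : ∫ y, sphi y = 1 := by
  rw [sphi_eq, MeasureTheory.integral_const_mul, integral_gaussian]
  rw [show Real.pi / (1/2) = 2 * Real.pi by ring]
  rw [inv_mul_cancel₀ (Real.sqrt_ne_zero'.mpr (by positivity))]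

lemma sPh_eq_Iic (y : ℝ) : sPh y = ∫ t in Set.Iic y, sphi t := by
  rw [sPh]
  exact setIntegral_congr_set Iio_ae_eq_Iic

lemma sPh_add_sT (y : ℝ) : sPh y + sT y = 1 := by
  rw [sPh_eq_Iic, sT, intervalIntegral.integral_Iic_add_Ioi integrable_sphi.integrableOn
    integrable_sphi.integrableOn, integral_sphi]

lemma sT_pos (y : ℝ) : 0 < sT y := by
  rw [sT]
  apply (setIntegral_pos_iff_support_of_nonneg_ae ?_ integrable_sphi.integrableOn).mpr
  · have : Function.support sphi = Set.univ := by
      ext z; simp [Function.mem_support, (sphi_pos z).ne']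
    rw [this, Set.univ_inter]
    simp [Real.volume_Ioi]
  · exact Filter.Eventually.of_forall fun z => (sphi_pos z).le

lemma sPh_pos (y : ℝ) : 0 < sPh y := by
  rw [sPh]
  apply (setIntegral_pos_iff_support_of_nonneg_ae ?_ integrable_sphi.integrableOn).mpr
  · have : Function.support sphi = Set.univ := by
      ext z; simp [Function.mem_support, (sphi_pos z).ne']
    rw [this, Set.univ_inter]
    simp [Real.volume_Iio]
  · exact Filter.Eventually.of_forall fun z => (sphi_pos z).le

lemma sT_le_one (y : ℝ) : sT y ≤ 1 := by
  have := sPh_add_sT y; have := sPh_pos y; linarith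

lemma sPh_eq_sT_neg (y : ℝ) : sPh y = sT (-y) := by
  rw [sPh_eq_Iic, sT]
  calc ∫ t in Set.Iic y, sphi t = ∫ t in Set.Iic y, sphi (-t) := by
        exact integral_congr_ae (Filter.Eventually.of_forall fun t => (sphi_even t).symm)
    _ = ∫ t in Set.Ioi (-y), sphi t := integral_comp_neg_Iic y sphi

lemma sT_zero : sT 0 = 1/2 := by
  have h1 := sPh_add_sT 0
  have h2 := sPh_eq_sT_neg 0
  rw [neg_zero] at h2; linarith

lemma integral_comp_add_right_Ioi (f : ℝ → ℝ) (a c : ℝ) :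
    ∫ x in Set.Ioi a, f (x + c) = ∫ x in Set.Ioi (a + c), f x := by
  have A : MeasurableEmbedding (fun x : ℝ => x + c) :=
    (Homeomorph.addRight c).isClosedEmbedding.measurableEmbedding
  have h := A.setIntegral_map (μ := volume) f (Set.Ioi (a + c))
  rw [map_add_right_eq_self volume c] at h
  rw [show (fun x : ℝ => x + c) ⁻¹' Set.Ioi (a + c) = Set.Ioi a by ext x; simp] at h
  rw [h]

lemma integral_comp_add_right_Iio (f : ℝ → ℝ) (a c : ℝ) :
    ∫ x in Set.Iio a, f (x + c) = ∫ x in Set.Iio (a + c), f x := by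
  have A : MeasurableEmbedding (fun x : ℝ => x + c) :=
    (Homeomorph.addRight c).isClosedEmbedding.measurableEmbedding
  have h := A.setIntegral_map (μ := volume) f (Set.Iio (a + c))
  rw [map_add_right_eq_self volume c] at h
  rw [show (fun x : ℝ => x + c) ⁻¹' Set.Iio (a + c) = Set.Iio a by ext x; simp] at h
  rw [h]

lemma mono_aux {a b : ℝ} (hab : a ≤ b) : sphi a * sT b ≤ sphi b * sT a := by
  have h1 : sphi a * sT b = ∫ u in Set.Ioi a, sphi a * sphi (u + (b - a)) := by
    rw [sT, ← MeasureTheory.integral_const_mul,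
      integral_comp_add_right_Ioi (fun s => sphi a * sphi s) a (b - a),
      show a + (b - a) = b by ring]
  have h2 : sphi b * sT a = ∫ u in Set.Ioi a, sphi b * sphi u := by
    rw [sT, ← MeasureTheory.integral_const_mul]
  rw [h1, h2]
  apply setIntegral_mono_on
  · exact ((integrable_sphi.comp_add_right (b - a)).const_mul _).integrableOn
  · exact (integrable_sphi.const_mul _).integrableOn
  · exact measurableSet_Ioi
  · intro u hu
    have hu' : a < u := hu
    simp only [sphi]
    have key : Real.exp (-a^2/2) * Real.exp (-(u+(b-a))^2/2)
        ≤ Real.exp (-b^2/2) * Real.exp (-u^2/2) := by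
      rw [← Real.exp_add, ← Real.exp_add]
      apply Real.exp_le_exp.mpr
      nlinarith [mul_nonneg (sub_nonneg.mpr hab) (sub_nonneg.mpr hu'.le)]
    have hc : (0:ℝ) ≤ ((Real.sqrt (2*Real.pi))⁻¹)^2 := sq_nonneg _
    nlinarith [key, hc]

lemma sPh_le_of_nonpos {y : ℝ} (hy : y ≤ 0) : 2 * sphi 0 * sPh y ≤ sphi y := by
  have h := mono_aux (show (0:ℝ) ≤ -y by linarith)
  rw [← sPh_eq_sT_neg, sT_zero, sphi_even] at h
  linarith

lemma normalPDF_eq {v : ℝ} (hv : 0 < v) (μ x : ℝ) :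
    normalPDF μ v x = (Real.sqrt v)⁻¹ * sphi ((x - μ) / Real.sqrt v) := by
  have h2π : (0:ℝ) ≤ 2 * Real.pi := by positivity
  rw [normalPDF, sphi, Real.sqrt_mul h2π, div_pow, Real.sq_sqrt hv.le,
    show -((x - μ)^2 / v)/2 = -(x - μ)^2/(2*v) from by ring]
  ring

lemma normalPDF_std (x : ℝ) : normalPDF 0 1 x = sphi x := by
  rw [normalPDF, sphi]
  norm_num

lemma normalCDF_eq {v : ℝ} (hv : 0 < v) (μ x : ℝ) :
    normalCDF μ v x = sPh ((x - μ) / Real.sqrt v) := by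
  have hsv : 0 < Real.sqrt v := Real.sqrt_pos.mpr hv
  have hR : 0 < (Real.sqrt v)⁻¹ := inv_pos.mpr hsv
  calc normalCDF μ v x
      = ∫ t in Set.Iio x, (Real.sqrt v)⁻¹ * sphi ((t - μ) / Real.sqrt v) := by
        rw [normalCDF]; exact integral_congr_ae (Filter.Eventually.of_forall
          fun t => normalPDF_eq hv μ t)
    _ = ∫ t in Set.Iio (x - μ), (Real.sqrt v)⁻¹ * sphi (t / Real.sqrt v) := by
        have h := integral_comp_add_right_Iio
          (fun t => (Real.sqrt v)⁻¹ * sphi (t / Real.sqrt v)) x (-μ)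
        simp only [← sub_eq_add_neg] at h
        exact h
    _ = (Real.sqrt v)⁻¹ * ∫ t in Set.Iio (x - μ), sphi ((Real.sqrt v)⁻¹ • t) := by
        rw [MeasureTheory.integral_const_mul]
        simp_rw [smul_eq_mul, div_eq_inv_mul]
    _ = sPh ((x - μ) / Real.sqrt v) := by
        rw [Measure.setIntegral_comp_smul_of_pos volume sphi _ hR,
          LinearOrderedField.smul_Iio hR]
        simp only [Module.finrank_self, pow_one, inv_inv, smul_eq_mul, sPh]
        rw [← mul_assoc, inv_mul_cancel₀ hsv.ne', one_mul, div_eq_inv_mul]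

lemma normalCDF_std (x : ℝ) : normalCDF 0 1 x = sPh x := by
  rw [normalCDF_eq one_pos, Real.sqrt_one, sub_zero, div_one]

set_option maxHeartbeats 1600000 in
lemma main_est (μ : ℝ) {v x : ℝ} (hv0 : 0 < v) (hv4 : v ≤ 1/4)
    (hr : Real.sqrt v * (sphi (2*|μ|+1) / sT (2*|μ|+1)) < sphi 0 / sT 0)
    (e : sphi x / ((Real.sqrt v)⁻¹ * sphi ((x - μ) / Real.sqrt v))
        = sT x / sT ((x - μ) / Real.sqrt v)) :
    sPh ((x - μ) / Real.sqrt v)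
        ≤ ((sphi (2*|μ|+1) / sT (2*|μ|+1)) / (2 * sphi 0)) * Real.sqrt v
    ∧ (x - μ)^2 ≤ (4*μ^2 + 4*Real.log 2) * v + 4 * Real.sqrt v := by
  have hsv : 0 < Real.sqrt v := Real.sqrt_pos.mpr hv0
  have hsv2 : Real.sqrt v ≤ 1/2 := by
    have h14 : Real.sqrt (1/4) = 1/2 := by
      rw [show (1:ℝ)/4 = (1/2)^2 by norm_num, Real.sqrt_sq (by norm_num)]
    calc Real.sqrt v ≤ Real.sqrt (1/4) := Real.sqrt_le_sqrt hv4
      _ = 1/2 := h14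
  have hsv1 : Real.sqrt v < 1 := lt_of_le_of_lt hsv2 (by norm_num)
  obtain ⟨t, ht_def⟩ : ∃ t, t = (x - μ) / Real.sqrt v := ⟨_, rfl⟩
  obtain ⟨K, hK_def⟩ : ∃ K, K = 2*|μ|+1 := ⟨_, rfl⟩
  rw [← ht_def] at e
  rw [← ht_def, ← hK_def]
  rw [← hK_def] at hr
  have hden1 : (Real.sqrt v)⁻¹ * sphi t ≠ 0 :=
    ne_of_gt (mul_pos (inv_pos.mpr hsv) (sphi_pos t))
  have E : Real.sqrt v * sphi x * sT t = sphi t * sT x := by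
    have h3 := (div_eq_div_iff hden1 (sT_pos t).ne').mp e
    calc Real.sqrt v * sphi x * sT t = Real.sqrt v * (sphi x * sT t) := by ring
      _ = Real.sqrt v * (sT x * ((Real.sqrt v)⁻¹ * sphi t)) := by rw [h3]
      _ = (Real.sqrt v * (Real.sqrt v)⁻¹) * (sphi t * sT x) := by ring
      _ = sphi t * sT x := by rw [mul_inv_cancel₀ hsv.ne']; ring
  have htx : sphi t / sT t = Real.sqrt v * (sphi x / sT x) := by
    rw [← mul_div_assoc, div_eq_div_iff (sT_pos t).ne' (sT_pos x).ne']
    linarith [E]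
  have hx_le : x ≤ K := by
    by_contra hgt
    push_neg at hgt
    have hxpos : 0 < x := lt_of_le_of_lt (by rw [hK_def]; positivity) hgt
    have htgt : x < t := by
      rw [ht_def, lt_div_iff₀ hsv]
      have habs : μ ≤ |μ| := le_abs_self μ
      have hmul : x * Real.sqrt v ≤ x * (1/2) :=
        mul_le_mul_of_nonneg_left hsv2 hxpos.le
      have hgt' : 2*|μ|+1 < x := by rw [← hK_def]; exact hgt
      linarith
    have hmono := mono_aux htgt.le
    have hp : 0 < sphi x * sT t := mul_pos (sphi_pos x) (sT_pos t)
    nlinarith [E, hp, hmono, hsv1]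
  have hdm : ∀ a b : ℝ, a ≤ b → sphi a / sT a ≤ sphi b / sT b := fun a b hab => by
    rw [div_le_div_iff₀ (sT_pos a) (sT_pos b)]; exact mono_aux hab
  have hht_le : sphi t / sT t ≤ Real.sqrt v * (sphi K / sT K) := by
    rw [htx]; exact mul_le_mul_of_nonneg_left (hdm x K hx_le) hsv.le
  have ht_neg : t < 0 := by
    by_contra hge; push_neg at hge
    have c1 : sphi 0 / sT 0 ≤ sphi t / sT t := hdm 0 t hge
    linarith
  have hphit_le : sphi t ≤ Real.sqrt v * (sphi K / sT K) := by
    have h1 : sphi t ≤ sphi t / sT t := by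
      rw [le_div_iff₀ (sT_pos t)]
      nlinarith [sphi_pos t, sT_le_one t, sT_pos t]
    linarith
  have hPh_le : 2 * sphi 0 * sPh t ≤ sphi t := sPh_le_of_nonpos ht_neg.le
  have h20 : 0 < 2 * sphi 0 := by have := sphi_pos 0; linarith
  constructor
  · rw [div_mul_eq_mul_div, le_div_iff₀ h20]
    nlinarith [hPh_le, hphit_le, (sPh_pos t).le]
  · have hPh_half : sPh t ≤ 1/2 := by
      have h1 := sphi_le_sphi_zero t
      have h2 := sphi_pos 0
      nlinarith [hPh_le, (sPh_pos t).le]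
    have hTt_half : 1/2 ≤ sT t := by have := sPh_add_sT t; linarith
    have hphix_le : sphi x ≤ sphi x / sT x := by
      rw [le_div_iff₀ (sT_pos x)]
      nlinarith [sphi_pos x, sT_le_one x, sT_pos x]
    have hht_ge : Real.sqrt v * sphi x ≤ 2 * sphi t := by
      have h1 : Real.sqrt v * sphi x ≤ Real.sqrt v * (sphi x / sT x) :=
        mul_le_mul_of_nonneg_left hphix_le hsv.le
      have h2 : sphi t / sT t ≤ 2 * sphi t := by
        rw [div_le_iff₀ (sT_pos t)]
        nlinarith [sphi_pos t]
      rw [← htx] at h1; linarith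
    have hlog : t^2 ≤ x^2 + 2*Real.log 2 - Real.log v := by
      have hcpos : 0 < (Real.sqrt (2*Real.pi))⁻¹ := by positivity
      have hexp : Real.sqrt v * Real.exp (-x^2/2) ≤ 2 * Real.exp (-t^2/2) := by
        simp only [sphi] at hht_ge
        have h1 : (Real.sqrt (2*Real.pi))⁻¹ * (Real.sqrt v * Real.exp (-x^2/2))
            ≤ (Real.sqrt (2*Real.pi))⁻¹ * (2 * Real.exp (-t^2/2)) := by
          calc (Real.sqrt (2*Real.pi))⁻¹ * (Real.sqrt v * Real.exp (-x^2/2))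
              = Real.sqrt v * ((Real.sqrt (2*Real.pi))⁻¹ * Real.exp (-x^2/2)) := by ring
            _ ≤ 2 * ((Real.sqrt (2*Real.pi))⁻¹ * Real.exp (-t^2/2)) := hht_ge
            _ = (Real.sqrt (2*Real.pi))⁻¹ * (2 * Real.exp (-t^2/2)) := by ring
        exact (mul_le_mul_iff_right₀ hcpos).mp h1
      have hlhs_pos : 0 < Real.sqrt v * Real.exp (-x^2/2) := by positivity
      have h2 := Real.log_le_log hlhs_pos hexp
      rw [Real.log_mul hsv.ne' (Real.exp_ne_zero _),
        Real.log_mul (by norm_num : (2:ℝ) ≠ 0) (Real.exp_ne_zero _),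
        Real.log_exp, Real.log_exp, Real.log_sqrt hv0.le] at h2
      linarith
    have ht2 : v * t^2 = (x - μ)^2 := by
      rw [ht_def, div_pow, Real.sq_sqrt hv0.le]
      field_simp
    have hnlv : v * (-Real.log v) ≤ 2 * Real.sqrt v := by
      have h1 : Real.log ((Real.sqrt v)⁻¹) ≤ (Real.sqrt v)⁻¹ - 1 :=
        Real.log_le_sub_one_of_pos (by positivity)
      rw [Real.log_inv, Real.log_sqrt hv0.le] at h1
      have h2 : -Real.log v ≤ 2 * (Real.sqrt v)⁻¹ := by linarith
      have h3 : v * (Real.sqrt v)⁻¹ = Real.sqrt v := by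
        rw [← Real.sqrt_mul_self hv0.le]
        field_simp
        rw [Real.sq_sqrt (Real.sqrt_nonneg _)]
      calc v * (-Real.log v) ≤ v * (2 * (Real.sqrt v)⁻¹) :=
            mul_le_mul_of_nonneg_left h2 hv0.le
        _ = 2 * (v * (Real.sqrt v)⁻¹) := by ring
        _ = 2 * Real.sqrt v := by rw [h3]
    have hx2 : x^2 ≤ 2*μ^2 + 2*(x-μ)^2 := by nlinarith [sq_nonneg (x - 2*μ)]
    have hs2v : (x-μ)^2 ≤ v*x^2 + v*(2*Real.log 2) + v*(-Real.log v) := by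
      have h1 := mul_le_mul_of_nonneg_left hlog hv0.le
      nlinarith [h1, ht2]
    nlinarith [hs2v, hnlv, hx2, hv4, sq_nonneg (x-μ)]

end Aux

set_option maxHeartbeats 1600000 in
theorem stmt15 (μ : ℝ) (β : ℝ → ℝ)
    (hβ : ∀ v ∈ Set.Ioo (0 : ℝ) 1,
      normalPDF 0 1 (β v) / normalPDF μ v (β v)
        = (1 - normalCDF 0 1 (β v)) / (1 - normalCDF μ v (β v))) :
    Filter.Tendsto β (nhdsWithin 0 (Set.Ioo 0 1)) (nhds μ) ∧
    Filter.Tendsto (fun v => normalCDF μ v (β v)) (nhdsWithin 0 (Set.Ioo 0 1)) (nhds 0) := by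
  have oneSub : ∀ y, 1 - sPh y = sT y := fun y => by have := sPh_add_sT y; linarith
  have h0pos : 0 < sphi 0 / sT 0 := div_pos (sphi_pos 0) (sT_pos 0)
  have hKpos : 0 < sphi (2*|μ|+1) / sT (2*|μ|+1) :=
    div_pos (sphi_pos _) (sT_pos _)
  obtain ⟨r, hr_def⟩ : ∃ r, r = (sphi 0 / sT 0) / (sphi (2*|μ|+1) / sT (2*|μ|+1)) := ⟨_, rfl⟩
  have hrpos : 0 < r := hr_def ▸ div_pos h0pos hKpos
  obtain ⟨v₀, hv₀def⟩ : ∃ w, w = min (1/4 : ℝ) (r^2/4) := ⟨_, rfl⟩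
  have hv₀pos : 0 < v₀ := hv₀def ▸ lt_min (by norm_num) (by positivity)
  have key : ∀ v ∈ Set.Ioo (0:ℝ) v₀,
      (0 ≤ normalCDF μ v (β v) ∧
        normalCDF μ v (β v)
          ≤ ((sphi (2*|μ|+1) / sT (2*|μ|+1)) / (2 * sphi 0)) * Real.sqrt v)
      ∧ (β v - μ)^2 ≤ (4*μ^2 + 4*Real.log 2) * v + 4 * Real.sqrt v := by
    rintro v ⟨hv0, hvv₀⟩
    rw [hv₀def] at hvv₀
    have hv4 : v ≤ 1/4 := le_trans hvv₀.le (min_le_left _ _)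
    have hv1 : v < 1 := lt_of_le_of_lt hv4 (by norm_num)
    have hsv : 0 < Real.sqrt v := Real.sqrt_pos.mpr hv0
    have hsvr : Real.sqrt v < r := by
      have h1 : Real.sqrt v < Real.sqrt (r^2/4) :=
        Real.sqrt_lt_sqrt hv0.le (lt_of_lt_of_le hvv₀ (min_le_right _ _))
      rw [show r^2/4 = (r/2)^2 by ring, Real.sqrt_sq (by positivity)] at h1
      linarith
    have hr : Real.sqrt v * (sphi (2*|μ|+1) / sT (2*|μ|+1)) < sphi 0 / sT 0 := by
      have h1 : Real.sqrt v * (sphi (2*|μ|+1) / sT (2*|μ|+1))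
          < r * (sphi (2*|μ|+1) / sT (2*|μ|+1)) := by nlinarith
      rw [hr_def, div_mul_cancel₀ _ hKpos.ne'] at h1
      exact h1
    have e := hβ v ⟨hv0, hv1⟩
    rw [normalPDF_std, normalPDF_eq hv0, normalCDF_std, normalCDF_eq hv0,
      oneSub, oneSub] at e
    obtain ⟨hb1, hb2⟩ := main_est μ hv0 hv4 hr e
    refine ⟨⟨?_, ?_⟩, hb2⟩
    · rw [normalCDF_eq hv0]; exact (sPh_pos _).le
    · rw [normalCDF_eq hv0]; exact hb1
  have hEv : ∀ᶠ v in nhdsWithin (0:ℝ) (Set.Ioo 0 1), v ∈ Set.Ioo (0:ℝ) v₀ := by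
    have h1 : ∀ᶠ v in nhdsWithin (0:ℝ) (Set.Ioo 0 1), v ∈ Set.Ioo (0:ℝ) 1 :=
      eventually_mem_nhdsWithin
    have h2 : ∀ᶠ v in nhdsWithin (0:ℝ) (Set.Ioo 0 1), v < v₀ :=
      Filter.Eventually.filter_mono nhdsWithin_le_nhds
        (Filter.eventually_iff_exists_mem.mpr ⟨Set.Iio v₀, Iio_mem_nhds hv₀pos, fun y hy => hy⟩)
    filter_upwards [h1, h2] with v hv1 hv2
    exact ⟨hv1.1, hv2⟩
  constructor
  · rw [tendsto_iff_dist_tendsto_zero]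
    apply squeeze_zero' (Filter.Eventually.of_forall fun v => dist_nonneg)
      (g := fun v => Real.sqrt ((4*μ^2 + 4*Real.log 2) * v + 4 * Real.sqrt v))
    · filter_upwards [hEv] with v hv
      have h := (key v hv).2
      rw [Real.dist_eq, ← Real.sqrt_sq_eq_abs]
      exact Real.sqrt_le_sqrt h
    · have hcont : Continuous fun v : ℝ =>
          Real.sqrt ((4*μ^2 + 4*Real.log 2) * v + 4 * Real.sqrt v) := by
        fun_prop
      have h := hcont.tendsto' 0 0 (by simp)
      exact h.mono_left nhdsWithin_le_nhds
  · apply squeeze_zero'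
      (g := fun v => ((sphi (2*|μ|+1) / sT (2*|μ|+1)) / (2 * sphi 0)) * Real.sqrt v)
    · filter_upwards [hEv] with v hv; exact ((key v hv).1).1
    · filter_upwards [hEv] with v hv; exact ((key v hv).1).2
    · have hcont : Continuous fun v : ℝ =>
          ((sphi (2*|μ|+1) / sT (2*|μ|+1)) / (2 * sphi 0)) * Real.sqrt v := by
        fun_prop
      have h := hcont.tendsto' 0 0 (by simp)
      exact h.mono_left nhdsWithin_le_nhds
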